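/- Let ω > 0, let K, K*, n be positive integers with K ≤ K* and n > 2K*, let x_i = 2π(i−1)/(ωn) for i = 1,…,n, and let β* ∈ ℝ^{2K*+1}. Then the function B ↦ ∑_{i=1}^n ( f_{K*}(x_i)ᵀβ* − f_K(x_i)ᵀB )² on ℝ^{2K+1} attains its minimum exactly at the truncation B̂ of β*, where B̂_j = β*_j for 0 ≤ j ≤ 2K; that is, B̂ is a minimizer, and any minimizer equals B̂. -/

import Mathlib

open Real Finset

/-- The order-`K` trigonometric regression design vector at time `x` with frequency `ω`:
component `0` is `1`, component `2k-1` is `sin (k ω x)`, component `2k` is `cos (k ω x)`. -/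
noncomputable def designVec (K : ℕ) (ω x : ℝ) : Fin (2 * K + 1) → ℝ := fun j =>
  if j.val = 0 then 1
  else if j.val % 2 = 1 then Real.sin ((((j.val + 1) / 2 : ℕ) : ℝ) * ω * x)
  else Real.cos (((j.val / 2 : ℕ) : ℝ) * ω * x)


section TrigAux

private lemma trig_sum_exp_unity (n : ℕ) (hn : 0 < n) (m : ℤ) :
    ∑ i ∈ Finset.range n, Complex.exp (((2 * π * m * i / n : ℝ) : ℂ) * Complex.I)
      = if (n:ℤ) ∣ m then (n:ℂ) else 0 := by
  have hn' : (n:ℂ) ≠ 0 := by exact_mod_cast hn.ne'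
  have hterm : ∀ i : ℕ, Complex.exp (((2 * π * m * i / n : ℝ) : ℂ) * Complex.I)
      = Complex.exp (2 * π * Complex.I * m / n) ^ i := by
    intro i
    rw [← Complex.exp_nat_mul]
    congr 1
    push_cast
    ring
  simp only [hterm]
  by_cases hdvd : (n:ℤ) ∣ m
  · obtain ⟨t, rfl⟩ := hdvd
    rw [show (2 * (π:ℂ) * Complex.I * (((n:ℤ) * t : ℤ) : ℂ) / (n:ℂ)) = ((t:ℤ):ℂ) * (2*π*Complex.I) by
      push_cast; field_simp, Complex.exp_int_mul_two_pi_mul_I]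
    rw [if_pos ⟨t, rfl⟩]
    simp
  · have hpi : (2 * (π:ℂ) * Complex.I : ℂ) ≠ 0 := by
      simp [Real.pi_ne_zero, Complex.I_ne_zero]
    have hz1 : Complex.exp (2 * π * Complex.I * m / n) ≠ 1 := by
      intro h
      rw [Complex.exp_eq_one_iff] at h
      obtain ⟨k, hk⟩ := h
      apply hdvd
      field_simp at hk
      have h3 : 2*(π:ℂ)*Complex.I * m = 2*π*Complex.I*(k*n) := by linear_combination (2*(π:ℂ)*Complex.I) * hk
      have h2 : (m:ℂ) = k*n := mul_left_cancel₀ hpi h3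
      have h2' : (m:ℂ) = n*k := by linear_combination h2
      exact ⟨k, by exact_mod_cast h2'⟩
    rw [geom_sum_eq hz1]
    have hzn : Complex.exp (2 * π * Complex.I * m / n) ^ n = 1 := by
      rw [← Complex.exp_nat_mul]
      rw [show (n:ℂ) * (2 * π * Complex.I * m / n) = (m:ℂ) * (2*π*Complex.I) by field_simp]
      exact_mod_cast Complex.exp_int_mul_two_pi_mul_I m
    rw [hzn]
    simp [hdvd]

private lemma trig_sum_cos (n : ℕ) (hn : 0 < n) (m : ℤ) :
    ∑ i ∈ Finset.range n, Real.cos (2 * π * m * i / n) = if (n:ℤ) ∣ m then (n:ℝ) else 0 := by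
  calc ∑ i ∈ Finset.range n, Real.cos (2 * π * m * i / n)
      = (∑ i ∈ Finset.range n, Complex.exp (((2 * π * m * i / n : ℝ) : ℂ) * Complex.I)).re := by
        rw [Complex.re_sum]
        simp only [Complex.exp_ofReal_mul_I_re]
    _ = if (n:ℤ) ∣ m then (n:ℝ) else 0 := by
        rw [trig_sum_exp_unity n hn m]
        split <;> simp

private lemma trig_sum_sin (n : ℕ) (hn : 0 < n) (m : ℤ) :
    ∑ i ∈ Finset.range n, Real.sin (2 * π * m * i / n) = 0 := by
  calc ∑ i ∈ Finset.range n, Real.sin (2 * π * m * i / n)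
      = (∑ i ∈ Finset.range n, Complex.exp (((2 * π * m * i / n : ℝ) : ℂ) * Complex.I)).im := by
        rw [Complex.im_sum]
        simp only [Complex.exp_ofReal_mul_I_im]
    _ = 0 := by
        rw [trig_sum_exp_unity n hn m]
        split <;> simp

private lemma trig_dvd_sub_iff (n k l : ℕ) (hk : k < n) (hl : l < n) :
    ((n:ℤ) ∣ ((k:ℤ) - l)) ↔ k = l := by
  constructor
  · intro h
    have := Int.eq_zero_of_abs_lt_dvd h (by
      rw [abs_sub_lt_iff]
      constructor <;> push_cast <;> omega)
    omega
  · rintro rfl; simp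

private lemma trig_dvd_add_iff (n k l : ℕ) (hkl : k + l < n) :
    ((n:ℤ) ∣ ((k:ℤ) + l)) ↔ k + l = 0 := by
  constructor
  · intro h
    have := Int.eq_zero_of_abs_lt_dvd h (by
      rw [abs_lt]
      constructor <;> push_cast <;> omega)
    omega
  · intro h
    have : (k:ℤ) + l = 0 := by push_cast; omega
    simp [this]

private lemma trig_sum_cos_cos (n : ℕ) (hn : 0 < n) (k l : ℕ) (hkl : k + l < n) :
    ∑ i ∈ Finset.range n, Real.cos (2*π*k*i/n) * Real.cos (2*π*l*i/n)
      = if k = l then (if k = 0 then (n:ℝ) else (n:ℝ)/2) else 0 := by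
  have key : ∀ i : ℕ, Real.cos (2*π*k*i/n) * Real.cos (2*π*l*i/n)
      = (Real.cos (2*π*((((k:ℤ)-l : ℤ)):ℝ)*i/n) + Real.cos (2*π*((((k:ℤ)+l : ℤ)):ℝ)*i/n))/2 := by
    intro i
    rw [show (2*π*((((k:ℤ)-l : ℤ)):ℝ)*i/n) = 2*π*k*i/n - 2*π*l*i/n by push_cast; ring,
        show (2*π*((((k:ℤ)+l : ℤ)):ℝ)*i/n) = 2*π*k*i/n + 2*π*l*i/n by push_cast; ring,
        Real.cos_sub, Real.cos_add]
    ring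
  simp only [key]
  rw [← Finset.sum_div, Finset.sum_add_distrib, trig_sum_cos n hn ((k:ℤ)-l),
      trig_sum_cos n hn ((k:ℤ)+l)]
  simp only [trig_dvd_sub_iff n k l (by omega) (by omega), trig_dvd_add_iff n k l hkl]
  by_cases h1 : k = l
  · subst h1
    by_cases h2 : k = 0 <;> simp [h2] <;> ring
  · simp [h1]; omega

private lemma trig_sum_sin_sin (n : ℕ) (hn : 0 < n) (k l : ℕ) (hkl : k + l < n) :
    ∑ i ∈ Finset.range n, Real.sin (2*π*k*i/n) * Real.sin (2*π*l*i/n)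
      = if k = l ∧ k ≠ 0 then (n:ℝ)/2 else 0 := by
  have key : ∀ i : ℕ, Real.sin (2*π*k*i/n) * Real.sin (2*π*l*i/n)
      = (Real.cos (2*π*((((k:ℤ)-l : ℤ)):ℝ)*i/n) - Real.cos (2*π*((((k:ℤ)+l : ℤ)):ℝ)*i/n))/2 := by
    intro i
    rw [show (2*π*((((k:ℤ)-l : ℤ)):ℝ)*i/n) = 2*π*k*i/n - 2*π*l*i/n by push_cast; ring,
        show (2*π*((((k:ℤ)+l : ℤ)):ℝ)*i/n) = 2*π*k*i/n + 2*π*l*i/n by push_cast; ring,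
        Real.cos_sub, Real.cos_add]
    ring
  simp only [key]
  rw [← Finset.sum_div, Finset.sum_sub_distrib, trig_sum_cos n hn ((k:ℤ)-l),
      trig_sum_cos n hn ((k:ℤ)+l)]
  simp only [trig_dvd_sub_iff n k l (by omega) (by omega), trig_dvd_add_iff n k l hkl]
  by_cases h1 : k = l
  · subst h1
    by_cases h2 : k = 0 <;> simp [h2] <;> ring
  · simp [h1]; omega

private lemma trig_sum_sin_cos (n : ℕ) (hn : 0 < n) (k l : ℕ) (hkl : k + l < n) :
    ∑ i ∈ Finset.range n, Real.sin (2*π*k*i/n) * Real.cos (2*π*l*i/n) = 0 := by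
  have key : ∀ i : ℕ, Real.sin (2*π*k*i/n) * Real.cos (2*π*l*i/n)
      = (Real.sin (2*π*((((k:ℤ)+l : ℤ)):ℝ)*i/n) + Real.sin (2*π*((((k:ℤ)-l : ℤ)):ℝ)*i/n))/2 := by
    intro i
    rw [show (2*π*((((k:ℤ)-l : ℤ)):ℝ)*i/n) = 2*π*k*i/n - 2*π*l*i/n by push_cast; ring,
        show (2*π*((((k:ℤ)+l : ℤ)):ℝ)*i/n) = 2*π*k*i/n + 2*π*l*i/n by push_cast; ring,
        Real.sin_sub, Real.sin_add]
    ring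
  simp only [key]
  rw [← Finset.sum_div, Finset.sum_add_distrib, trig_sum_sin n hn ((k:ℤ)+l),
      trig_sum_sin n hn ((k:ℤ)-l)]
  norm_num

/-- Uniform description of the design vector entries on the equispaced grid. -/
noncomputable def tEnt (n v i : ℕ) : ℝ :=
  if v % 2 = 1 then Real.sin (2*π*(((v+1)/2 : ℕ):ℝ)*i/n)
  else Real.cos (2*π*(((v+1)/2 : ℕ):ℝ)*i/n)

private lemma designVec_eq_tEnt (K : ℕ) (ω : ℝ) (hω : ω ≠ 0) (n : ℕ) (hn : 0 < n) (i : ℕ)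
    (j : Fin (2*K+1)) :
    designVec K ω (2*π*i/(ω*n)) j = tEnt n j.val i := by
  have hn' : (n:ℝ) ≠ 0 := by positivity
  have harg : ∀ m : ℕ, (m:ℝ) * ω * (2*π*i/(ω*n)) = 2*π*(m:ℝ)*i/n := by
    intro m; field_simp
  unfold designVec tEnt
  by_cases h0 : j.val = 0
  · simp [h0]
  · by_cases h1 : j.val % 2 = 1
    · simp only [h0, h1, if_false, if_true, reduceIte]
      rw [harg]
    · simp only [h0, h1, if_false, reduceIte]
      rw [show j.val / 2 = (j.val + 1) / 2 by omega, harg]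

private lemma trig_gram (n Kstar : ℕ) (hn : 2*Kstar < n) (j j' : Fin (2*Kstar+1)) :
    ∑ i ∈ Finset.range n, tEnt n j.val i * tEnt n j'.val i
      = if j = j' then (if j.val = 0 then (n:ℝ) else (n:ℝ)/2) else 0 := by
  have hn0 : 0 < n := by omega
  have hj := j.isLt
  have hj' := j'.isLt
  have hkl : (j.val+1)/2 + (j'.val+1)/2 < n := by omega
  have hext : (j = j') ↔ j.val = j'.val := (Fin.val_eq_val j j').symm
  unfold tEnt
  by_cases p : j.val % 2 = 1 <;> by_cases p' : j'.val % 2 = 1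
  · simp only [p, p', reduceIte]
    rw [trig_sum_sin_sin n hn0 _ _ hkl]
    by_cases h : j = j'
    · have hv : j.val = j'.val := hext.mp h
      rw [if_pos h]
      split_ifs <;> first | rfl | omega
    · have hv : j.val ≠ j'.val := fun hh => h (hext.mpr hh)
      simp [h, show ¬((j.val+1)/2 = (j'.val+1)/2 ∧ (j.val+1)/2 ≠ 0) by omega]
      intro hh _; omega
  · simp only [p, p', reduceIte]
    rw [trig_sum_sin_cos n hn0 _ _ hkl]
    have : j ≠ j' := fun h => by have := hext.mp h; omega
    simp [this]
  · simp only [p, p', reduceIte]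
    have comm : ∀ i ∈ Finset.range n,
        Real.cos (2*π*(((j.val+1)/2 : ℕ):ℝ)*i/n) * Real.sin (2*π*(((j'.val+1)/2 : ℕ):ℝ)*i/n)
        = Real.sin (2*π*(((j'.val+1)/2 : ℕ):ℝ)*i/n) * Real.cos (2*π*(((j.val+1)/2 : ℕ):ℝ)*i/n) :=
      fun i _ => mul_comm _ _
    rw [Finset.sum_congr rfl comm, trig_sum_sin_cos n hn0 _ _ (by omega)]
    have : j ≠ j' := fun h => by have := hext.mp h; omega
    simp [this]
  · simp only [p, p', reduceIte]
    rw [trig_sum_cos_cos n hn0 _ _ hkl]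
    by_cases h : j = j'
    · have hv : j.val = j'.val := hext.mp h
      rw [if_pos h]
      split_ifs <;> first | rfl | omega
    · have hv : j.val ≠ j'.val := fun hh => h (hext.mpr hh)
      simp [h, show (j.val+1)/2 ≠ (j'.val+1)/2 by omega]

private lemma trig_sum_sq_expand {M : ℕ} (n : ℕ) (g : ℕ → Fin M → ℝ) (c d : Fin M → ℝ)
    (hG : ∀ j j' : Fin M, ∑ i ∈ Finset.range n, g i j * g i j' = if j = j' then d j else 0) :
    ∑ i ∈ Finset.range n, (∑ j : Fin M, g i j * c j)^2 = ∑ j : Fin M, d j * (c j)^2 := by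
  have step1 : ∀ i, (∑ j : Fin M, g i j * c j)^2
      = ∑ j : Fin M, ∑ j' : Fin M, (c j * c j') * (g i j * g i j') := by
    intro i
    rw [sq, Finset.sum_mul_sum]
    exact Finset.sum_congr rfl fun j _ => Finset.sum_congr rfl fun j' _ => by ring
  simp only [step1]
  calc ∑ i ∈ Finset.range n, ∑ j : Fin M, ∑ j' : Fin M, (c j * c j') * (g i j * g i j')
      = ∑ j : Fin M, ∑ j' : Fin M, (c j * c j') * ∑ i ∈ Finset.range n, g i j * g i j' := by
        rw [Finset.sum_comm]
        refine Finset.sum_congr rfl fun j _ => ?_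
        rw [Finset.sum_comm]
        exact Finset.sum_congr rfl fun j' _ => (Finset.mul_sum _ _ _).symm
    _ = ∑ j : Fin M, ∑ j' : Fin M, (if j = j' then (c j * c j') * d j else 0) := by
        refine Finset.sum_congr rfl fun j _ => Finset.sum_congr rfl fun j' _ => ?_
        rw [hG]
        split_ifs <;> simp
    _ = ∑ j : Fin M, d j * (c j)^2 := by
        refine Finset.sum_congr rfl fun j _ => ?_
        rw [Finset.sum_ite_eq Finset.univ j (fun j' => (c j * c j') * d j)]
        simp [sq]
        ring

end TrigAux
/-- Under the equispaced design with `n > 2K*` and `K ≤ K*`, the underspecified least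
squares objective `B ↦ ∑ᵢ (f_{K*}(xᵢ)ᵀβ* − f_K(xᵢ)ᵀB)²` attains its minimum exactly at
the truncation of `β*` to its first `2K+1` coordinates. -/
theorem underspecified_least_squares_truncation (ω : ℝ) (hω : 0 < ω) (K Kstar n : ℕ)
    (hK : 1 ≤ K) (hKK : K ≤ Kstar) (hn : 2 * Kstar < n)
    (x : Fin n → ℝ) (hx : ∀ i : Fin n, x i = 2 * π * i / (ω * n))
    (βstar : Fin (2 * Kstar + 1) → ℝ)
    (L : (Fin (2 * K + 1) → ℝ) → ℝ)
    (hL : ∀ B : Fin (2 * K + 1) → ℝ,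
      L B = ∑ i : Fin n,
        ((∑ j' : Fin (2 * Kstar + 1), designVec Kstar ω (x i) j' * βstar j') -
          (∑ j : Fin (2 * K + 1), designVec K ω (x i) j * B j)) ^ 2)
    (Bhat : Fin (2 * K + 1) → ℝ)
    (hBhat : ∀ j : Fin (2 * K + 1), Bhat j = βstar (Fin.castLE (by omega) j)) :
    (∀ B : Fin (2 * K + 1) → ℝ, L Bhat ≤ L B) ∧
    (∀ B : Fin (2 * K + 1) → ℝ, (∀ B' : Fin (2 * K + 1) → ℝ, L B ≤ L B') → B = Bhat) := by

  have hω' : ω ≠ 0 := ne_of_gt hω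
  have hn0 : 0 < n := by omega
  have hcast : (2*K+1) ≤ 2*Kstar+1 := by omega
  set ext : (Fin (2*K+1) → ℝ) → (Fin (2*Kstar+1) → ℝ) :=
    fun B j' => if h : j'.val < 2*K+1 then B ⟨j'.val, h⟩ else 0 with hextdef
  set d : Fin (2*Kstar+1) → ℝ := fun j' => if j'.val = 0 then (n:ℝ) else (n:ℝ)/2 with hd
  have key1 : ∀ B : Fin (2*K+1) → ℝ,
      L B = ∑ j' : Fin (2*Kstar+1), d j' * (βstar j' - ext B j')^2 := by
    intro B
    have hres : ∀ i : ℕ,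
        ((∑ j' : Fin (2*Kstar+1), designVec Kstar ω (2*π*i/(ω*n)) j' * βstar j') -
          (∑ j : Fin (2*K+1), designVec K ω (2*π*i/(ω*n)) j * B j))
        = ∑ j' : Fin (2*Kstar+1), tEnt n j'.val i * (βstar j' - ext B j') := by
      intro i
      have hA : ∑ j' : Fin (2*Kstar+1), designVec Kstar ω (2*π*i/(ω*n)) j' * βstar j'
          = ∑ j' : Fin (2*Kstar+1), tEnt n j'.val i * βstar j' :=
        Finset.sum_congr rfl fun j' _ => by
          rw [designVec_eq_tEnt Kstar ω hω' n hn0 i j']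
      have hB : ∑ j : Fin (2*K+1), designVec K ω (2*π*i/(ω*n)) j * B j
          = ∑ j' : Fin (2*Kstar+1), tEnt n j'.val i * ext B j' := by
        have h1 : ∑ j : Fin (2*K+1), designVec K ω (2*π*i/(ω*n)) j * B j
            = ∑ t ∈ Finset.range (2*K+1),
                (if h : t < 2*K+1 then tEnt n t i * B ⟨t, h⟩ else 0) := by
          rw [← Fin.sum_univ_eq_sum_range
            (fun t => if h : t < 2*K+1 then tEnt n t i * B ⟨t,h⟩ else 0) (2*K+1)]
          refine Finset.sum_congr rfl fun j _ => ?_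
          rw [designVec_eq_tEnt K ω hω' n hn0 i j, dif_pos j.isLt]
        have h2 : ∑ j' : Fin (2*Kstar+1), tEnt n j'.val i * ext B j'
            = ∑ t ∈ Finset.range (2*Kstar+1),
                (if h : t < 2*K+1 then tEnt n t i * B ⟨t, h⟩ else 0) := by
          rw [← Fin.sum_univ_eq_sum_range
            (fun t => if h : t < 2*K+1 then tEnt n t i * B ⟨t,h⟩ else 0) (2*Kstar+1)]
          refine Finset.sum_congr rfl fun j' _ => ?_
          simp only [hextdef]
          by_cases h : (j' : ℕ) < 2*K+1
          · rw [dif_pos h, dif_pos h]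
          · rw [dif_neg h, dif_neg h, mul_zero]
        rw [h1, h2]
        exact Finset.sum_subset (Finset.range_subset_range.mpr (by omega))
          (fun t _ ht => dif_neg (by simpa using ht))
      rw [hA, hB, ← Finset.sum_sub_distrib]
      exact Finset.sum_congr rfl fun j' _ => by ring
    rw [hL]
    have hstep : ∀ i : Fin n,
        ((∑ j' : Fin (2*Kstar+1), designVec Kstar ω (x i) j' * βstar j') -
          (∑ j : Fin (2*K+1), designVec K ω (x i) j * B j))^2
        = (fun t : ℕ =>
            (∑ j' : Fin (2*Kstar+1), tEnt n j'.val t * (βstar j' - ext B j'))^2) i.val := by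
      intro i
      simp only
      rw [hx i, hres i.val]
    rw [Finset.sum_congr rfl (fun i _ => hstep i),
        Fin.sum_univ_eq_sum_range
          (fun t => (∑ j' : Fin (2*Kstar+1), tEnt n j'.val t * (βstar j' - ext B j'))^2) n]
    refine trig_sum_sq_expand n (fun i j' => tEnt n j'.val i) _ d fun j j' => ?_
    rw [trig_gram n Kstar hn j j']
  set d' : Fin (2*K+1) → ℝ := fun j => if j.val = 0 then (n:ℝ) else (n:ℝ)/2 with hd'
  set T : (Fin (2*K+1) → ℝ) → ℝ :=
    fun B => ∑ j : Fin (2*K+1), d' j * (βstar (Fin.castLE hcast j) - B j)^2 with hTdef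
  have key2 : ∀ B, L B = L Bhat + T B := by
    intro B
    rw [key1 B, key1 Bhat]
    have hsplit : ∀ j' : Fin (2*Kstar+1),
        d j' * (βstar j' - ext B j')^2
        = d j' * (βstar j' - ext Bhat j')^2
          + (if h : j'.val < 2*K+1 then d' ⟨j'.val, h⟩ * (βstar j' - B ⟨j'.val, h⟩)^2 else 0) := by
      intro j'
      by_cases h : (j' : ℕ) < 2*K+1
      · have he1 : ext Bhat j' = βstar j' := by
          simp only [hextdef]
          rw [dif_pos h, hBhat]
          congr 1
        have he2 : ext B j' = B ⟨j'.val, h⟩ := by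
          simp only [hextdef]; rw [dif_pos h]
        have hdd : d j' = d' ⟨j'.val, h⟩ := rfl
        rw [he1, he2, dif_pos h, ← hdd]
        ring
      · have he1 : ext Bhat j' = 0 := by simp only [hextdef]; rw [dif_neg h]
        have he2 : ext B j' = 0 := by simp only [hextdef]; rw [dif_neg h]
        rw [he1, he2, dif_neg h, add_zero]
    rw [Finset.sum_congr rfl (fun j' _ => hsplit j'), Finset.sum_add_distrib]
    congr 1
    have hr1 : ∑ j' : Fin (2*Kstar+1),
        (if h : j'.val < 2*K+1 then d' ⟨j'.val, h⟩ * (βstar j' - B ⟨j'.val, h⟩)^2 else 0)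
        = ∑ t ∈ Finset.range (2*Kstar+1),
            (if h : t < 2*K+1 then
              d' ⟨t, h⟩ * (βstar ⟨t, lt_of_lt_of_le h hcast⟩ - B ⟨t, h⟩)^2 else 0) := by
      rw [← Fin.sum_univ_eq_sum_range
        (fun t => if h : t < 2*K+1 then
          d' ⟨t, h⟩ * (βstar ⟨t, lt_of_lt_of_le h hcast⟩ - B ⟨t, h⟩)^2 else 0) (2*Kstar+1)]
    rw [hr1, ← Finset.sum_subset (Finset.range_subset_range.mpr hcast)
      (fun t _ ht => dif_neg (by simpa using ht))]
    rw [← Fin.sum_univ_eq_sum_range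
      (fun t => if h : t < 2*K+1 then
        d' ⟨t, h⟩ * (βstar ⟨t, lt_of_lt_of_le h hcast⟩ - B ⟨t, h⟩)^2 else 0) (2*K+1)]
    refine Finset.sum_congr rfl fun j _ => ?_
    rw [dif_pos j.isLt]
    congr 1
  have hnR : (0:ℝ) < n := by exact_mod_cast hn0
  have hd'pos : ∀ j : Fin (2*K+1), 0 < d' j := fun j => by
    simp only [hd']
    split_ifs <;> linarith
  have hTnn : ∀ B, 0 ≤ T B := fun B =>
    Finset.sum_nonneg fun j _ => mul_nonneg (le_of_lt (hd'pos j)) (sq_nonneg _)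
  constructor
  · intro B
    rw [key2 B]
    linarith [hTnn B]
  · intro B hmin
    have h1 : L B ≤ L Bhat := hmin Bhat
    rw [key2 B] at h1
    have hT0 : T B = 0 := le_antisymm (by linarith) (hTnn B)
    funext j
    have hterm := (Finset.sum_eq_zero_iff_of_nonneg
      (fun j (_ : j ∈ Finset.univ) =>
        mul_nonneg (le_of_lt (hd'pos j)) (sq_nonneg (βstar (Fin.castLE hcast j) - B j)))).mp
      hT0 j (Finset.mem_univ j)
    have hsq : (βstar (Fin.castLE hcast j) - B j)^2 = 0 := by
      rcases mul_eq_zero.mp hterm with h | h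
      · exact absurd h (ne_of_gt (hd'pos j))
      · exact h
    have hz : βstar (Fin.castLE hcast j) - B j = 0 := by
      have := sq_eq_zero_iff.mp hsq
      exact this
    rw [hBhat j]
    have : βstar (Fin.castLE hcast j) = βstar (Fin.castLE (by omega) j) := rfl
    linarith [sub_eq_zero.mp hz, this ▸ (rfl : βstar (Fin.castLE hcast j) = βstar (Fin.castLE hcast j))]
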